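/- Let M : {0,1}^n × {0,1}^n → ℝ be computed by a Σ∘ReLU circuit of size s, i.e., M = Σ_{i=1}^s L_i where each L_i is a ReLU gate. Then s ≥ spr(M) / (3(n+1)). -/

import Mathlib

open Matrix MeasureTheory

/-- A blocky matrix: its support is a disjoint union of combinatorial rectangles,
with value 1 on the support and 0 elsewhere. -/
def IsBlocky {F : Type*} [Field F] {m n : Type*} (M : Matrix m n F) : Prop :=
  ∃ (k : ℕ) (S : Fin k → Finset m) (T : Fin k → Finset n),
    (∀ a b, a ≠ b → Disjoint (S a) (S b)) ∧
    (∀ a b, a ≠ b → Disjoint (T a) (T b)) ∧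
    (∀ i j, (∃ l, i ∈ S l ∧ j ∈ T l) → M i j = 1) ∧
    (∀ i j, (¬ ∃ l, i ∈ S l ∧ j ∈ T l) → M i j = 0)

/-- A spiky matrix: the entrywise product of a blocky matrix and a rank-one matrix. -/
def IsSpiky {F : Type*} [Field F] {m n : Type*} (M : Matrix m n F) : Prop :=
  ∃ (B : Matrix m n F) (u : m → F) (v : n → F),
    IsBlocky B ∧ ∀ i j, M i j = B i j * (u i * v j)

/-- The spiky rank: minimum number of spiky matrices summing to `M`. -/
noncomputable def spikyRank {F : Type*} [Field F] {m n : Type*} (M : Matrix m n F) : ℕ :=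
  sInf {r | ∃ f : Fin r → Matrix m n F, (∀ i, IsSpiky (f i)) ∧ ∑ i, f i = M}

/-- The blocky rank: minimum number of blocky matrices whose linear combination equals `M`. -/
noncomputable def blockyRank {F : Type*} [Field F] {m n : Type*} (M : Matrix m n F) : ℕ :=
  sInf {r | ∃ (f : Fin r → Matrix m n F) (c : Fin r → F),
    (∀ i, IsBlocky (f i)) ∧ ∑ i, c i • f i = M}

/-- Sparsity: the number of nonzero entries of a matrix. -/
noncomputable def matSparsity {F : Type*} [Zero F] {m n : Type*} (M : Matrix m n F) : ℕ :=
  {p : m × n | M p.1 p.2 ≠ 0}.ncard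

/-- Rank-`r` rigidity: minimum number of entries that must be changed to bring the rank
down to `r`. -/
noncomputable def rigidity {F : Type*} [Field F] {N : ℕ}
    (M : Matrix (Fin N) (Fin N) F) (r : ℕ) : ℕ :=
  sInf {s | ∃ A C : Matrix (Fin N) (Fin N) F, M = A + C ∧ A.rank ≤ r ∧ matSparsity C ≤ s}

/-- Sign spiky rank: minimum spiky rank over real matrices with the same sign pattern. -/
noncomputable def signSpikyRank {m n : Type*} (M : Matrix m n ℝ) : ℕ :=
  sInf {r | ∃ A : Matrix m n ℝ,
    (∀ i j, Real.sign (A i j) = Real.sign (M i j)) ∧ spikyRank A ≤ r}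

/-- Blocky cover number: minimum number of blocky matrices whose supports' union is
exactly the set of 1-entries of the Boolean matrix `M`. -/
noncomputable def blockyCover {m n : Type*} (M : Matrix m n ℝ) : ℕ :=
  sInf {k | ∃ f : Fin k → Matrix m n ℝ, (∀ l, IsBlocky (f l)) ∧
    ∀ i j, M i j = 1 ↔ ∃ l, f l i j = 1}
namespace SRLB

def cond (t p q : ℕ) : Prop := p / 2^(t+1) = q / 2^(t+1) ∧ p.testBit t ∧ ¬ q.testBit t

instance (t p q : ℕ) : Decidable (cond t p q) := by unfold cond; infer_instance

lemma testBit_iff (p t : ℕ) : p.testBit t ↔ p / 2^t % 2 = 1 := by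
  rw [Nat.testBit_eq_decide_div_mod_eq]; simp

lemma cond_lt {t p q : ℕ} (h : cond t p q) : q < p := by
  obtain ⟨h1, h2, h3⟩ := h
  rw [testBit_iff] at h2 h3
  have hp : p / 2^t % 2 = 1 := h2
  have hq : q / 2^t % 2 = 0 := by omega
  have h1' : p / 2^t / 2 = q / 2^t / 2 := by
    rw [Nat.div_div_eq_div_mul, Nat.div_div_eq_div_mul, ← pow_succ] at *
    exact h1
  have hlt : q / 2^t < p / 2^t := by omega
  by_contra hle
  exact absurd (Nat.div_le_div_right (Nat.le_of_not_lt hle)) (Nat.not_le_of_lt hlt)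

lemma cond_exists {p q : ℕ} (h : q < p) : ∃ t, cond t p q := by
  have hex : ∃ t, p / 2^(t+1) = q / 2^(t+1) := by
    refine ⟨p, ?_⟩
    rw [Nat.div_eq_of_lt (Nat.lt_of_lt_of_le (Nat.lt_two_pow_self (n := p)) (Nat.pow_le_pow_right (by norm_num) (by omega))),
        Nat.div_eq_of_lt (Nat.lt_of_lt_of_le (Nat.lt_of_lt_of_le h (Nat.le_of_lt (Nat.lt_two_pow_self (n := p)))) (Nat.pow_le_pow_right (by norm_num) (by omega)))]
  classical
  obtain ⟨t, ht, hmin⟩ : ∃ t, p / 2^(t+1) = q / 2^(t+1) ∧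
      ∀ u < t, ¬ (p / 2^(u+1) = q / 2^(u+1)) :=
    ⟨Nat.find hex, Nat.find_spec hex, fun u hu => Nat.find_min hex hu⟩
  have hne : p / 2^t ≠ q / 2^t := by
    match t with
    | 0 => simpa using Nat.ne_of_gt h
    | Nat.succ t' => exact hmin t' (Nat.lt_succ_self t')
  have h1' : p / 2^t / 2 = q / 2^t / 2 := by
    rw [Nat.div_div_eq_div_mul, Nat.div_div_eq_div_mul, ← pow_succ]; exact ht
  have hle : q / 2^t ≤ p / 2^t := Nat.div_le_div_right (Nat.le_of_lt h)
  refine ⟨t, ht, ?_, ?_⟩ <;> rw [testBit_iff] <;> omega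

lemma cond_unique {t t' p q : ℕ} (h : cond t p q) (h' : cond t' p q) : t = t' := by
  by_contra hne
  wlog hlt : t < t' generalizing t t'
  · exact this h' h (Ne.symm hne) (by omega)
  obtain ⟨h1, _, _⟩ := h
  obtain ⟨_, h2', h3'⟩ := h'
  have : p / 2^t' = q / 2^t' := by
    have e : 2^(t+1) * 2^(t' - (t+1)) = 2^t' := by
      rw [← pow_add]; congr 1; omega
    rw [← e, ← Nat.div_div_eq_div_mul, ← Nat.div_div_eq_div_mul, h1]
  rw [testBit_iff] at h2' h3'
  omega

lemma cond_bound {t p q m : ℕ} (h : cond t p q) (hp : p < 2^m) : t < m := by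
  by_contra hle
  have : p.testBit t = false :=
    Nat.testBit_lt_two_pow (Nat.lt_of_lt_of_le hp (Nat.pow_le_pow_right (by norm_num) (by omega)))
  exact absurd h.2.1 (by simp [this])

lemma gate_decomp {X Y : Type*} [Fintype X] [Fintype Y] [DecidableEq X] [DecidableEq Y]
    (a : X → ℝ) (b : Y → ℝ) (m : ℕ) (hm : Fintype.card X + Fintype.card Y ≤ 2^m) :
    ∃ f : Fin m × Bool → Matrix X Y ℝ, (∀ i, IsSpiky (f i)) ∧
      ∀ x y, (∑ i, f i) x y = max 0 (a x + b y) := by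
  classical
  set V : Finset ℝ := Finset.univ.image a ∪ Finset.univ.image (fun y => -b y) with hV
  have hVcard : V.card ≤ 2^m := le_trans (le_trans (Finset.card_union_le _ _)
    (add_le_add Finset.card_image_le Finset.card_image_le)) (by simpa using hm)
  set ρ : ℝ → ℕ := fun v => (V.filter (· < v)).card with hρ
  have ρ_mono : ∀ {v w : ℝ}, v ≤ w → ρ v ≤ ρ w := fun {v w} h =>
    Finset.card_le_card (fun z hz => by
      simp only [Finset.mem_filter] at *
      exact ⟨hz.1, lt_of_lt_of_le hz.2 h⟩)
  have ρ_strict : ∀ {v w : ℝ}, v ∈ V → v < w → ρ v < ρ w := by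
    intro v w hv h
    apply Finset.card_lt_card
    constructor
    · intro z hz
      simp only [Finset.mem_filter] at *
      exact ⟨hz.1, lt_trans hz.2 h⟩
    · intro hsub
      have := hsub (by simp only [Finset.mem_filter]; exact ⟨hv, h⟩)
      simp only [Finset.mem_filter] at this
      exact lt_irrefl v this.2
  have ρ_lt : ∀ {v : ℝ}, v ∈ V → ρ v < 2^m := by
    intro v hv
    refine lt_of_lt_of_le (Finset.card_lt_card ?_) hVcard
    constructor
    · exact Finset.filter_subset _ _
    · intro hsub
      have := hsub hv
      simp only [Finset.mem_filter] at this
      exact lt_irrefl v this.2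
  have haV : ∀ x, a x ∈ V := fun x => Finset.mem_union_left _ (Finset.mem_image_of_mem _ (Finset.mem_univ x))
  have hbV : ∀ y, -b y ∈ V := fun y => Finset.mem_union_right _ (Finset.mem_image_of_mem _ (Finset.mem_univ y))
  set r : X → ℕ := fun x => ρ (a x) with hr
  set c : Y → ℕ := fun y => ρ (-b y) with hc
  have rbound : ∀ x, r x < 2^m := fun x => ρ_lt (haV x)
  have keyiff : ∀ x y, 0 < a x + b y ↔ c y < r x := by
    intro x y
    constructor
    · intro h
      exact ρ_strict (hbV y) (by linarith)
    · intro h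
      by_contra hle
      exact absurd (ρ_mono (show a x ≤ -b y by linarith)) (Nat.not_le_of_lt h)
  set B : Fin m → Matrix X Y ℝ := fun t => Matrix.of fun x y => if cond t.val (r x) (c y) then (1:ℝ) else 0 with hB
  have hblocky : ∀ t : Fin m, IsBlocky (B t) := by
    intro t
    refine ⟨2^m,
      fun h => Finset.univ.filter (fun x => r x / 2^(t.val+1) = h.val ∧ (r x).testBit t.val),
      fun h => Finset.univ.filter (fun y => c y / 2^(t.val+1) = h.val ∧ ¬ (c y).testBit t.val),
      ?_, ?_, ?_, ?_⟩
    · intro h1 h2 hne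
      rw [Finset.disjoint_left]
      intro x hx1 hx2
      simp only [Finset.mem_filter] at hx1 hx2
      exact hne (Fin.ext (hx1.2.1 ▸ hx2.2.1))
    · intro h1 h2 hne
      rw [Finset.disjoint_left]
      intro y hy1 hy2
      simp only [Finset.mem_filter] at hy1 hy2
      exact hne (Fin.ext (hy1.2.1 ▸ hy2.2.1))
    · rintro x y ⟨l, hx, hy⟩
      simp only [Finset.mem_filter] at hx hy
      have : cond t.val (r x) (c y) := ⟨by rw [hx.2.1, hy.2.1], hx.2.2, hy.2.2⟩
      simp [hB, this]
    · intro x y hne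
      have : ¬ cond t.val (r x) (c y) := by
        intro hcond
        refine hne ⟨⟨r x / 2^(t.val+1), Nat.lt_of_le_of_lt (Nat.div_le_self _ _) (rbound x)⟩, ?_, ?_⟩
        · exact Finset.mem_filter.mpr ⟨Finset.mem_univ x, rfl, hcond.2.1⟩
        · exact Finset.mem_filter.mpr ⟨Finset.mem_univ y, by rw [← hcond.1], hcond.2.2⟩
      simp [hB, this]
  refine ⟨fun p => Matrix.of fun x y =>
    (if cond p.1.val (r x) (c y) then (1:ℝ) else 0) *
    (if p.2 then (1 : ℝ) * b y else a x * 1), ?_, ?_⟩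
  · rintro ⟨t, bo⟩
    cases bo
    · exact ⟨B t, a, fun _ => 1, hblocky t, fun x y => by simp [hB]⟩
    · exact ⟨B t, fun _ => 1, b, hblocky t, fun x y => by simp [hB]⟩
  · intro x y
    rw [Matrix.sum_apply, Fintype.sum_prod_type]
    have hsum : (∑ t : Fin m, (if cond t.val (r x) (c y) then (1:ℝ) else 0))
        = if c y < r x then 1 else 0 := by
      rw [Finset.sum_boole]
      by_cases h : c y < r x
      · obtain ⟨t0, ht0⟩ := cond_exists h
        have ht0m : t0 < m := cond_bound ht0 (rbound x)
        rw [if_pos h]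
        norm_num
        rw [Finset.card_eq_one]
        refine ⟨⟨t0, ht0m⟩, ?_⟩
        ext u
        simp only [Finset.mem_filter, Finset.mem_univ, true_and, Finset.mem_singleton]
        constructor
        · intro hu
          exact Fin.ext (cond_unique hu ht0)
        · rintro rfl
          exact ht0
      · rw [if_neg h]
        norm_num
        intro u
        exact fun hcond => h (cond_lt hcond)
    have expand : ∀ t : Fin m, (∑ bo : Bool, ((if cond t.val (r x) (c y) then (1:ℝ) else 0) *
        (if bo then (1 : ℝ) * b y else a x * 1)))
        = (if cond t.val (r x) (c y) then (1:ℝ) else 0) * (a x + b y) := by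
      intro t
      rw [Fintype.sum_bool]
      by_cases hcnd : cond t.val (r x) (c y) <;> simp [hcnd] <;> ring
    calc (∑ t : Fin m, ∑ bo : Bool, (Matrix.of fun x y =>
          (if cond t.val (r x) (c y) then (1:ℝ) else 0) *
          (if bo then (1 : ℝ) * b y else a x * 1)) x y)
        = ∑ t : Fin m, (if cond t.val (r x) (c y) then (1:ℝ) else 0) * (a x + b y) := by
          apply Finset.sum_congr rfl
          intro t _
          exact expand t
      _ = (if c y < r x then (1:ℝ) else 0) * (a x + b y) := by rw [← Finset.sum_mul, hsum]
      _ = max 0 (a x + b y) := by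
          by_cases h : 0 < a x + b y
          · rw [if_pos ((keyiff x y).1 h), max_eq_right (le_of_lt h), one_mul]
          · rw [if_neg (fun hc' => h ((keyiff x y).2 hc')), max_eq_left (by linarith [not_lt.1 h]), zero_mul]

lemma spikyRank_le_card {m n : Type*} {ι : Type*} [Fintype ι] (M : Matrix m n ℝ)
    (f : ι → Matrix m n ℝ) (hs : ∀ i, IsSpiky (f i)) (hsum : ∑ i, f i = M) :
    spikyRank M ≤ Fintype.card ι := by
  apply Nat.sInf_le
  refine ⟨fun j => f ((Fintype.equivFin ι).symm j), fun j => hs _, ?_⟩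
  rw [← hsum]
  exact Equiv.sum_comp (Fintype.equivFin ι).symm f

end SRLB

/-- A Σ∘ReLU circuit of size s computing M must satisfy s ≥ spr(M)/(3(n+1)). -/
theorem sigma_relu_size_lower_bound (n s : ℕ)
    (w₁ w₂ : Fin s → Fin n → ℝ) (α : Fin s → ℝ)
    (M : Matrix (Fin n → Bool) (Fin n → Bool) ℝ)
    (hM : ∀ x y, M x y = ∑ i, max 0
      (∑ j, w₁ i j * (if x j then (1 : ℝ) else 0) +
       ∑ j, w₂ i j * (if y j then (1 : ℝ) else 0) + α i)) :
    (spikyRank M : ℝ) / (3 * (n + 1)) ≤ s := by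
  classical
  have hcard : Fintype.card (Fin n → Bool) = 2^n := by
    simp [Fintype.card_fun]
  have key : ∀ i : Fin s, ∃ f : Fin (n+1) × Bool → Matrix (Fin n → Bool) (Fin n → Bool) ℝ,
      (∀ p, IsSpiky (f p)) ∧ ∀ x y, (∑ p, f p) x y = max 0
        (∑ j, w₁ i j * (if x j then (1 : ℝ) else 0) +
         ∑ j, w₂ i j * (if y j then (1 : ℝ) else 0) + α i) := by
    intro i
    obtain ⟨f, h1, h2⟩ := SRLB.gate_decomp
      (fun x : Fin n → Bool => ∑ j, w₁ i j * (if x j then (1 : ℝ) else 0))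
      (fun y : Fin n → Bool => (∑ j, w₂ i j * (if y j then (1 : ℝ) else 0)) + α i)
      (n+1) (by rw [hcard]; ring_nf; omega)
    exact ⟨f, h1, fun x y => (h2 x y).trans (by rw [← add_assoc])⟩
  choose F hFs hFsum using key
  set G : (Fin s × (Fin (n+1) × Bool)) → Matrix (Fin n → Bool) (Fin n → Bool) ℝ :=
    fun p => F p.1 p.2 with hG
  have hGsum : ∑ p, G p = M := by
    ext x y
    rw [Matrix.sum_apply, Fintype.sum_prod_type, hM]
    apply Finset.sum_congr rfl
    intro i _
    have := hFsum i x y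
    rw [Matrix.sum_apply] at this
    exact this
  have hle : spikyRank M ≤ s * ((n+1) * 2) := by
    have := SRLB.spikyRank_le_card M G (fun p => hFs p.1 p.2) hGsum
    simpa using this
  have hpos : (0:ℝ) < 3 * (n + 1) := by positivity
  rw [div_le_iff₀ hpos]
  have h2 : (spikyRank M : ℝ) ≤ (s * ((n+1) * 2) : ℕ) := Nat.cast_le.mpr hle
  push_cast at h2
  nlinarith [h2, Nat.cast_nonneg (α := ℝ) s]
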